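/- arXiv:0910.4306 — 4 statements merged into one kernel-verified Lean document; each statement's English description precedes it below -/
import Mathlib

section
/- For complex numbers a, b, c and a nonnegative integer α, the value of the iterated partial derivative ∂^α/∂z₁^α ∂^α/∂z₂^α of exp(a z₁ + b z₂ + c z₁ z₂) evaluated at z₁ = z₂ = 0 equals Σ_{h=0}^{α} (ab)^h c^{α−h} binom(α,h)² (α−h)!. -/
open Complex Finset

private lemma my_iteratedDeriv_add {f g : ℂ → ℂ} {n : ℕ} (hf : ContDiff ℂ n f)
    (hg : ContDiff ℂ n g) (x : ℂ) :
    iteratedDeriv n (fun z => f z + g z) x = iteratedDeriv n f x + iteratedDeriv n g x := by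
  simp_rw [← iteratedDerivWithin_univ]
  exact iteratedDerivWithin_add (Set.mem_univ x) uniqueDiffOn_univ
    hf.contDiffAt.contDiffWithinAt hg.contDiffAt.contDiffWithinAt

private lemma my_iteratedDeriv_cmul (c : ℂ) {f : ℂ → ℂ} {n : ℕ} (hf : ContDiff ℂ n f) (x : ℂ) :
    iteratedDeriv n (fun z => c * f z) x = c * iteratedDeriv n f x := by
  simp_rw [← iteratedDerivWithin_univ]
  exact iteratedDerivWithin_const_mul (Set.mem_univ x) uniqueDiffOn_univ c hf.contDiffAt.contDiffWithinAt

private lemma contdiff_pow_exp (b : ℂ) (k : ℕ) :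
    ContDiff ℂ ⊤ (fun z : ℂ => z ^ k * Complex.exp (b * z)) :=
  (contDiff_id.pow k).mul (Complex.contDiff_exp.comp (contDiff_const.mul contDiff_id))

private lemma key (b : ℂ) : ∀ n j : ℕ,
    iteratedDeriv n (fun z : ℂ => z ^ j * Complex.exp (b * z)) 0 =
      (n.choose j : ℂ) * (j.factorial : ℂ) * b ^ (n - j) := by
  intro n
  induction n with
  | zero =>
    intro j
    cases j with
    | zero => simp
    | succ k => simp [Nat.choose_eq_zero_of_lt]
  | succ n ih =>
    intro j
    have hd : deriv (fun z : ℂ => z ^ j * Complex.exp (b * z)) =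
        fun z => (j : ℂ) * (z ^ (j - 1) * Complex.exp (b * z))
          + b * (z ^ j * Complex.exp (b * z)) := by
      funext z
      have h1 : HasDerivAt (fun z : ℂ => z ^ j) ((j : ℂ) * z ^ (j - 1)) z := hasDerivAt_pow j z
      have h2 : HasDerivAt (fun z : ℂ => Complex.exp (b * z)) (b * Complex.exp (b * z)) z := by
        simpa [mul_comm] using ((hasDerivAt_id z).const_mul b).cexp
      rw [(show HasDerivAt (fun z : ℂ => z ^ j * Complex.exp (b * z)) _ z from h1.mul h2).deriv]; ring
    rw [iteratedDeriv_succ', hd,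
      my_iteratedDeriv_add
        ((contDiff_const.mul (contdiff_pow_exp b (j-1))).of_le le_top)
        ((contDiff_const.mul (contdiff_pow_exp b j)).of_le le_top),
      my_iteratedDeriv_cmul _ ((contdiff_pow_exp b (j-1)).of_le le_top),
      my_iteratedDeriv_cmul _ ((contdiff_pow_exp b j).of_le le_top),
      ih, ih]
    cases j with
    | zero => simp [pow_succ]; ring
    | succ k =>
      simp only [Nat.add_sub_cancel, Nat.succ_sub_succ, Nat.sub_zero]
      rcases lt_or_ge k n with h | h
      · have hb : b ^ (n - k) = b ^ (n - (k + 1)) * b := by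
          rw [← pow_succ]
          congr 1
          omega
        have hc : (((n + 1).choose (k + 1) : ℕ) : ℂ) =
            (n.choose k : ℂ) + (n.choose (k + 1) : ℂ) := by
          rw [Nat.choose_succ_succ]
          push_cast
          ring
        rw [hb, hc]
        push_cast [Nat.factorial_succ]
        ring
      · have h1 : n.choose (k + 1) = 0 := Nat.choose_eq_zero_of_lt (by omega)
        have h2 : (n + 1).choose (k + 1) = n.choose k := by
          rw [Nat.choose_succ_succ, h1, Nat.add_zero]
        have h3 : n - k = 0 := by omega
        have h4 : n - (k + 1) = 0 := by omega
        rw [h1, h2, h3, h4]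
        push_cast [Nat.factorial_succ]
        ring
  
private lemma my_iteratedDeriv_sum {ι : Type*} [DecidableEq ι] (s : Finset ι) (f : ι → ℂ → ℂ)
    {n : ℕ} (h : ∀ i ∈ s, ContDiff ℂ n (f i)) (x : ℂ) :
    iteratedDeriv n (fun z => ∑ i ∈ s, f i z) x = ∑ i ∈ s, iteratedDeriv n (f i) x := by
  induction s using Finset.induction with
  | empty =>
    simp only [Finset.sum_empty]
    rw [iteratedDeriv_eq_iterate, Function.iterate_fixed (by funext z; simp)]
  | insert _ _ hns ih =>
    rename_i i s
    simp only [Finset.sum_insert hns]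
    rw [my_iteratedDeriv_add (h i (Finset.mem_insert_self i s))
      (ContDiff.sum fun j hj => h j (Finset.mem_insert_of_mem hj)) x,
      ih fun j hj => h j (Finset.mem_insert_of_mem hj)]

theorem iterated_deriv_exp_bilinear (a b c : ℂ) (α : ℕ) :
    iteratedDeriv α
      (fun z₂ : ℂ => iteratedDeriv α
        (fun z₁ : ℂ => Complex.exp (a * z₁ + b * z₂ + c * z₁ * z₂)) 0) 0 =
    ∑ h ∈ range (α + 1),
      (a * b) ^ h * c ^ (α - h) * ((α.choose h : ℂ)) ^ 2 * ((α - h).factorial : ℂ) := by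
  have h1 : (fun z₂ : ℂ => iteratedDeriv α
      (fun z₁ : ℂ => Complex.exp (a * z₁ + b * z₂ + c * z₁ * z₂)) 0) =
      fun z₂ : ℂ => ∑ j ∈ range (α + 1),
        ((α.choose j : ℂ) * a ^ (α - j) * c ^ j) * (z₂ ^ j * Complex.exp (b * z₂)) := by
    funext z₂
    have he : (fun z₁ : ℂ => Complex.exp (a * z₁ + b * z₂ + c * z₁ * z₂)) =
        fun z₁ : ℂ => Complex.exp (b * z₂) * Complex.exp ((a + c * z₂) * z₁) := by
      funext z₁
      rw [← Complex.exp_add]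
      ring_nf
    have hce : ContDiff ℂ ⊤ (fun z : ℂ => Complex.exp ((a + c * z₂) * z)) :=
      Complex.contDiff_exp.comp (contDiff_const.mul contDiff_id)
    rw [he, my_iteratedDeriv_cmul _ (hce.of_le le_top),
      iteratedDeriv_cexp_const_mul]
    simp only [mul_zero, Complex.exp_zero, mul_one]
    rw [add_comm a (c * z₂), add_pow, Finset.mul_sum]
    refine Finset.sum_congr rfl fun j hj => ?_
    rw [mul_pow]
    ring
  rw [h1, my_iteratedDeriv_sum _ _
    (fun j _ => (contDiff_const.mul (contdiff_pow_exp b j)).of_le le_top)]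
  rw [← Finset.sum_range_reflect]
  refine Finset.sum_congr rfl fun j hj => ?_
  have hj' : j ≤ α := Nat.lt_succ_iff.mp (Finset.mem_range.mp hj)
  have e1 : α + 1 - 1 - j = α - j := by omega
  rw [e1, my_iteratedDeriv_cmul _ ((contdiff_pow_exp b (α - j)).of_le le_top), key]
  have e2 : α - (α - j) = j := Nat.sub_sub_self hj'
  rw [e2, Nat.choose_symm hj']
  ring
end

section
/- Let k and m be integers and let φ : ℍ × ℂ² → ℂ be holomorphic. Define the slash action (φ|_{k,m} M)(τ,z₁,z₂) = (cτ+d)^{−k} exp(−2πi m c z₁ z₂/(cτ+d)) φ(Mτ, z₁/(cτ+d), z₂/(cτ+d)) for M = [[a,b],[c,d]] ∈ SL(2,ℝ), and the heat operator L_{k,m} = 8πim ∂_τ − (2k−2)(1/z₁) ∂_{z₂} − (2k−2)(1/z₂) ∂_{z₁} − 4 ∂²_{z₁ z₂}. Then L_{k,m}(φ|_{k,m} M) = (L_{k,m} φ)|_{k+2,m} M. -/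
open Complex Matrix


section Helpers
open Complex Metric MeasureTheory

lemma step_frac2 (Aa Bb Cc d1 d2 cc R : ℂ) (hd1 : d1 ≠ 0) (hd2 : d2 ≠ 0)
    (h : (Aa * d2 - Bb * (d1 * d2) - Cc * d1) * cc = R * (d1 * d2)) :
    (Aa / d1 - Bb - Cc / d2) * cc = R := by
  have e : Aa / d1 - Bb - Cc / d2 = (Aa * d2 - Bb * (d1 * d2) - Cc * d1) / (d1 * d2) := by
    field_simp
  rw [e, div_mul_eq_mul_div, div_eq_iff (mul_ne_zero hd1 hd2), h]


lemma differentiable_param_deriv {ψ : ℂ → ℂ → ℂ}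
    (hψ : Differentiable ℂ (fun p : ℂ × ℂ => ψ p.1 p.2)) (a : ℂ) :
    Differentiable ℂ (fun w => deriv (fun u => ψ u w) a) := by
  have hsliceu : ∀ w, Differentiable ℂ (fun u => ψ u w) := fun w =>
    hψ.comp (differentiable_id.prodMk (differentiable_const w))
  have hslicew : ∀ ζ x, HasDerivAt (fun w => ψ ζ w)
      (fderiv ℂ (fun p : ℂ × ℂ => ψ p.1 p.2) (ζ, x) (0, 1)) x := fun ζ x =>
    (hψ (ζ, x)).hasFDerivAt.comp_hasDerivAt x ((hasDerivAt_const x ζ).prodMk (hasDerivAt_id x))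
  have hrepr : (fun w => deriv (fun u => ψ u w) a)
      = fun w => (2 * ↑Real.pi * I)⁻¹ •
          ∫ θ in (0:ℝ)..(2 * Real.pi), (circleMap 0 1 θ * I) •
            ((circleMap 0 1 θ) ^ (-2 : ℤ) • ψ (circleMap a 1 θ) w) := by
    funext w
    rw [eq_inv_smul_iff₀ (by simp [Real.pi_ne_zero, I_ne_zero]), ← DiffContOnCl.deriv_eq_smul_circleIntegral one_pos
      ⟨(hsliceu w).differentiableOn, (hsliceu w).continuous.continuousOn⟩]
    simp only [circleIntegral, deriv_circleMap, circleMap_sub_center, one_div, _root_.zpow_neg, zpow_ofNat]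
  rw [hrepr]
  intro w₀
  have hcm_ne : ∀ θ : ℝ, circleMap 0 1 θ ≠ 0 := fun θ => by
    simp [circleMap, Complex.exp_ne_zero]
  have hccont : Continuous fun θ : ℝ => (circleMap 0 1 θ * I) • ((circleMap 0 1 θ) ^ (-2 : ℤ) : ℂ) :=
    ((continuous_circleMap 0 1).mul continuous_const).smul
      ((continuous_circleMap 0 1).zpow₀ (-2) fun θ => Or.inl (hcm_ne θ))
  obtain ⟨Cb, hCb⟩ := ((isCompact_closedBall a 1).prod (isCompact_closedBall w₀ 2)).exists_bound_of_continuousOn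
    (hψ.continuous.continuousOn)
  have key := (intervalIntegral.hasDerivAt_integral_of_dominated_loc_of_deriv_le
      (F := fun x θ => (circleMap 0 1 θ * I) • ((circleMap 0 1 θ) ^ (-2 : ℤ) • ψ (circleMap a 1 θ) x))
      (F' := fun x θ => (circleMap 0 1 θ * I) • ((circleMap 0 1 θ) ^ (-2 : ℤ) •
        fderiv ℂ (fun p : ℂ × ℂ => ψ p.1 p.2) (circleMap a 1 θ, x) (0, 1)))
      (bound := fun _ => Cb) (x₀ := w₀) (a := 0) (b := 2 * Real.pi) (μ := volume)
      (Metric.ball_mem_nhds w₀ one_pos)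
      (Filter.Eventually.of_forall fun x =>
        (Continuous.aestronglyMeasurable (by
          exact ((continuous_circleMap 0 1).mul continuous_const).smul
            (((continuous_circleMap 0 1).zpow₀ (-2) fun θ => Or.inl (hcm_ne θ)).smul
              (hψ.continuous.comp ((continuous_circleMap a 1).prodMk continuous_const))))))
      (by
        apply Continuous.intervalIntegrable
        exact ((continuous_circleMap 0 1).mul continuous_const).smul
          (((continuous_circleMap 0 1).zpow₀ (-2) fun θ => Or.inl (hcm_ne θ)).smul
            (hψ.continuous.comp ((continuous_circleMap a 1).prodMk continuous_const))))
      (by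
        apply Measurable.aestronglyMeasurable
        exact (((continuous_circleMap 0 1).mul continuous_const).measurable).smul
          ((((continuous_circleMap 0 1).zpow₀ (-2) fun θ => Or.inl (hcm_ne θ)).measurable).smul
            ((measurable_fderiv_apply_const ℂ _ ((0:ℂ), (1:ℂ))).comp
              ((continuous_circleMap a 1).prodMk continuous_const).measurable)))
      (Filter.Eventually.of_forall fun θ _ x hx => by
        show ‖(circleMap 0 1 θ * I) • ((circleMap 0 1 θ) ^ (-2 : ℤ) •
            fderiv ℂ (fun p : ℂ × ℂ => ψ p.1 p.2) (circleMap a 1 θ, x) (0, 1))‖ ≤ Cb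
        have hd : fderiv ℂ (fun p : ℂ × ℂ => ψ p.1 p.2) (circleMap a 1 θ, x) (0, 1)
            = deriv (fun w => ψ (circleMap a 1 θ) w) x := (hslicew _ x).deriv.symm
        have hdiffw : Differentiable ℂ (fun w => ψ (circleMap a 1 θ) w) :=
          hψ.comp ((differentiable_const _).prodMk differentiable_id)
        have hnorm : ‖deriv (fun w => ψ (circleMap a 1 θ) w) x‖ ≤ Cb := by
          have := Complex.norm_deriv_le_of_forall_mem_sphere_norm_le (c := x) (R := 1) (C := Cb)
            one_pos ⟨hdiffw.differentiableOn, hdiffw.continuous.continuousOn⟩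
            (fun s hs => hCb (circleMap a 1 θ, s)
              ⟨sphere_subset_closedBall (circleMap_mem_sphere a one_pos.le θ), by
                have ht1 : dist s w₀ ≤ dist s x + dist x w₀ := dist_triangle _ _ _
                have ht2 : dist s x = 1 := mem_sphere.mp hs
                have ht3 : dist x w₀ < 1 := mem_ball.mp hx
                exact mem_closedBall.mpr (by linarith)⟩)
          simpa using this
        rw [norm_smul, norm_smul]
        have e1 : ‖circleMap 0 1 θ * I‖ = 1 := by
          simp [norm_circleMap_zero]
        have e2 : ‖((circleMap 0 1 θ) ^ (-2 : ℤ) : ℂ)‖ = 1 := by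
          rw [norm_zpow]
          simp [norm_circleMap_zero]
        rw [e1, e2, hd, one_mul, one_mul]
        exact hnorm)
      intervalIntegrable_const
      (Filter.Eventually.of_forall fun θ _ x _ => by
        exact ((hslicew (circleMap a 1 θ) x).const_smul ((circleMap 0 1 θ) ^ (-2 : ℤ) : ℂ)).const_smul
          (circleMap 0 1 θ * I))).2
  exact DifferentiableAt.fun_const_smul key.differentiableAt _


lemma hasDerivAt_comp3 {φ : ℂ → ℂ → ℂ → ℂ}
    (hφ : Differentiable ℂ (fun p : ℂ × ℂ × ℂ => φ p.1 p.2.1 p.2.2))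
    {f g h : ℂ → ℂ} {f' g' h' t x y z : ℂ}
    (hf : HasDerivAt f f' t) (hg : HasDerivAt g g' t) (hh : HasDerivAt h h' t)
    (hx : f t = x) (hy : g t = y) (hz : h t = z) :
    HasDerivAt (fun s => φ (f s) (g s) (h s))
      (deriv (fun v => φ v y z) x * f' + deriv (fun v => φ x v z) y * g'
        + deriv (fun v => φ x y v) z * h') t := by
  subst hx hy hz
  have H : HasDerivAt (fun s => φ (f s) (g s) (h s))
      (fderiv ℂ (fun p : ℂ × ℂ × ℂ => φ p.1 p.2.1 p.2.2) (f t, g t, h t) (f', g', h')) t :=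
    (hφ _).hasFDerivAt.comp_hasDerivAt t (hf.prodMk (hg.prodMk hh))
  have e1 : deriv (fun v => φ v (g t) (h t)) (f t)
      = fderiv ℂ (fun p : ℂ × ℂ × ℂ => φ p.1 p.2.1 p.2.2) (f t, g t, h t) (1, 0, 0) :=
    HasDerivAt.deriv <| HasFDerivAt.comp_hasDerivAt (l := fun p : ℂ × ℂ × ℂ => φ p.1 p.2.1 p.2.2) (f t) (hφ (f t, g t, h t)).hasFDerivAt
      ((hasDerivAt_id (f t)).prodMk ((hasDerivAt_const (f t) (g t)).prodMk (hasDerivAt_const (f t) (h t))))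
  have e2 : deriv (fun v => φ (f t) v (h t)) (g t)
      = fderiv ℂ (fun p : ℂ × ℂ × ℂ => φ p.1 p.2.1 p.2.2) (f t, g t, h t) (0, 1, 0) :=
    HasDerivAt.deriv <| HasFDerivAt.comp_hasDerivAt (l := fun p : ℂ × ℂ × ℂ => φ p.1 p.2.1 p.2.2) (g t) (hφ (f t, g t, h t)).hasFDerivAt
      ((hasDerivAt_const (g t) (f t)).prodMk ((hasDerivAt_id (g t)).prodMk (hasDerivAt_const (g t) (h t))))
  have e3 : deriv (fun v => φ (f t) (g t) v) (h t)
      = fderiv ℂ (fun p : ℂ × ℂ × ℂ => φ p.1 p.2.1 p.2.2) (f t, g t, h t) (0, 0, 1) :=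
    HasDerivAt.deriv <| HasFDerivAt.comp_hasDerivAt (l := fun p : ℂ × ℂ × ℂ => φ p.1 p.2.1 p.2.2) (h t) (hφ (f t, g t, h t)).hasFDerivAt
      ((hasDerivAt_const (h t) (f t)).prodMk ((hasDerivAt_const (h t) (g t)).prodMk (hasDerivAt_id (h t))))
  rw [e1, e2, e3]
  have edec : ((f', g', h') : ℂ × ℂ × ℂ)
      = f' • ((1:ℂ), (0:ℂ), (0:ℂ)) + g' • ((0:ℂ), (1:ℂ), (0:ℂ)) + h' • ((0:ℂ), (0:ℂ), (1:ℂ)) := by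
    simp [Prod.ext_iff]
  rw [edec, map_add, map_add, _root_.map_smul, _root_.map_smul, _root_.map_smul] at H
  simpa [smul_eq_mul, mul_comm] using H

end Helpers

noncomputable def heatOp (k m : ℤ) (φ : ℂ → ℂ → ℂ → ℂ) : ℂ → ℂ → ℂ → ℂ :=
  fun τ z₁ z₂ =>
    8 * Real.pi * Complex.I * m * deriv (fun t => φ t z₁ z₂) τ
      - (2 * k - 2) / z₁ * deriv (fun w => φ τ z₁ w) z₂
      - (2 * k - 2) / z₂ * deriv (fun w => φ τ w z₂) z₁
      - 4 * deriv (fun w => deriv (fun u => φ τ u w) z₁) z₂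

noncomputable def hermSlash (k m : ℤ) (M : Matrix.SpecialLinearGroup (Fin 2) ℝ)
    (φ : ℂ → ℂ → ℂ → ℂ) : ℂ → ℂ → ℂ → ℂ :=
  fun τ z₁ z₂ =>
    ((M 1 0 : ℝ) * τ + (M 1 1 : ℝ)) ^ (-k) *
      Complex.exp (-2 * Real.pi * Complex.I * m * (M 1 0 : ℝ) * z₁ * z₂ /
        ((M 1 0 : ℝ) * τ + (M 1 1 : ℝ))) *
      φ (((M 0 0 : ℝ) * τ + (M 0 1 : ℝ)) / ((M 1 0 : ℝ) * τ + (M 1 1 : ℝ)))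
        (z₁ / ((M 1 0 : ℝ) * τ + (M 1 1 : ℝ)))
        (z₂ / ((M 1 0 : ℝ) * τ + (M 1 1 : ℝ)))

set_option maxHeartbeats 2000000 in
lemma aux_slash (k m : ℤ) (φ : ℂ → ℂ → ℂ → ℂ)
    (hφ : Differentiable ℂ (fun p : ℂ × ℂ × ℂ => φ p.1 p.2.1 p.2.2))
    (A B C D τ z₁ z₂ : ℂ) (hdet : A * D - B * C = 1)
    (hJ : C * τ + D ≠ 0) (h1 : z₁ ≠ 0) (h2 : z₂ ≠ 0) :
    heatOp k m (fun t y₁ y₂ => (C * t + D) ^ (-k) *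
        Complex.exp (-2 * Real.pi * Complex.I * m * C * y₁ * y₂ / (C * t + D)) *
        φ ((A * t + B) / (C * t + D)) (y₁ / (C * t + D)) (y₂ / (C * t + D))) τ z₁ z₂
      = (C * τ + D) ^ (-(k + 2)) *
        Complex.exp (-2 * Real.pi * Complex.I * m * C * z₁ * z₂ / (C * τ + D)) *
        heatOp k m φ ((A * τ + B) / (C * τ + D)) (z₁ / (C * τ + D)) (z₂ / (C * τ + D)) := by
  simp only [heatOp]
  -- basic derivatives
  have hJd : HasDerivAt (fun t => C * t + D) C τ := by
    simpa using ((hasDerivAt_id τ).const_mul C).add_const D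
  -- derivative of the Möbius map
  have hσ : HasDerivAt (fun t => (A * t + B) / (C * t + D)) (1 / (C * τ + D) ^ 2) τ := by
    have hn : HasDerivAt (fun t => A * t + B) A τ := by
      simpa using ((hasDerivAt_id τ).const_mul A).add_const B
    have hb : HasDerivAt (fun t => (A * t + B) / (C * t + D))
        ((A * (C * τ + D) - (A * τ + B) * C) / (C * τ + D) ^ 2) τ := hn.div hJd hJ
    have hv : (A * (C * τ + D) - (A * τ + B) * C) / (C * τ + D) ^ 2 = 1 / (C * τ + D) ^ 2 := by
      have hone : A * (C * τ + D) - (A * τ + B) * C = 1 := by linear_combination hdet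
      rw [hone]
    exact hv ▸ hb
  have hw1τ : HasDerivAt (fun t => z₁ / (C * t + D))
      ((0 * (C * τ + D) - z₁ * C) / (C * τ + D) ^ 2) τ := (hasDerivAt_const τ z₁).div hJd hJ
  have hw2τ : HasDerivAt (fun t => z₂ / (C * t + D))
      ((0 * (C * τ + D) - z₂ * C) / (C * τ + D) ^ 2) τ := (hasDerivAt_const τ z₂).div hJd hJ
  have hzp : HasDerivAt (fun t => (C * t + D) ^ (-k))
      (((-k : ℤ) : ℂ) * (C * τ + D) ^ (-k - 1) * C) τ :=
    HasDerivAt.comp τ (h₂ := fun x => x ^ (-k)) (hasDerivAt_zpow (-k) (C * τ + D) (Or.inl hJ)) hJd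
  have hexpτ : HasDerivAt (fun t => Complex.exp (-2 * Real.pi * Complex.I * m * C * z₁ * z₂ / (C * t + D)))
      (Complex.exp (-2 * Real.pi * Complex.I * m * C * z₁ * z₂ / (C * τ + D)) *
        ((0 * (C * τ + D) - -2 * Real.pi * Complex.I * m * C * z₁ * z₂ * C) / (C * τ + D) ^ 2)) τ :=
    ((hasDerivAt_const τ (-2 * Real.pi * Complex.I * m * C * z₁ * z₂)).div hJd hJ).cexp
  have hφτ := hasDerivAt_comp3 hφ hσ hw1τ hw2τ
    (show (fun t => (A * t + B) / (C * t + D)) τ = (A * τ + B) / (C * τ + D) from rfl)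
    (show (fun t => z₁ / (C * t + D)) τ = z₁ / (C * τ + D) from rfl)
    (show (fun t => z₂ / (C * t + D)) τ = z₂ / (C * τ + D) from rfl)
  have H1 : deriv (fun t => (C * t + D) ^ (-k) *
      Complex.exp (-2 * Real.pi * Complex.I * m * C * z₁ * z₂ / (C * t + D)) *
      φ ((A * t + B) / (C * t + D)) (z₁ / (C * t + D)) (z₂ / (C * t + D))) τ = _ :=
    ((hzp.mul hexpτ).mul hφτ).deriv
  -- derivative in z₂
  have hexp2 : HasDerivAt (fun w => Complex.exp (-2 * Real.pi * Complex.I * m * C * z₁ * w / (C * τ + D)))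
      (Complex.exp (-2 * Real.pi * Complex.I * m * C * z₁ * z₂ / (C * τ + D)) *
        (-2 * Real.pi * Complex.I * m * C * z₁ * 1 / (C * τ + D))) z₂ :=
    (((hasDerivAt_id z₂).const_mul (-2 * Real.pi * Complex.I * m * C * z₁)).div_const (C * τ + D)).cexp
  have hφ2 := hasDerivAt_comp3 hφ
    (hasDerivAt_const z₂ ((A * τ + B) / (C * τ + D)))
    (hasDerivAt_const z₂ (z₁ / (C * τ + D)))
    ((hasDerivAt_id z₂).div_const (C * τ + D))
    (show (fun _ : ℂ => (A * τ + B) / (C * τ + D)) z₂ = (A * τ + B) / (C * τ + D) from rfl)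
    (show (fun _ : ℂ => z₁ / (C * τ + D)) z₂ = z₁ / (C * τ + D) from rfl)
    (show (fun w : ℂ => w / (C * τ + D)) z₂ = z₂ / (C * τ + D) from rfl)
  have H2 : deriv (fun w => (C * τ + D) ^ (-k) *
      Complex.exp (-2 * Real.pi * Complex.I * m * C * z₁ * w / (C * τ + D)) *
      φ ((A * τ + B) / (C * τ + D)) (z₁ / (C * τ + D)) (w / (C * τ + D))) z₂ = _ :=
    ((hexp2.const_mul ((C * τ + D) ^ (-k))).mul hφ2).deriv
  -- derivative in z₁
  have hexp3 : HasDerivAt (fun w => Complex.exp (-2 * Real.pi * Complex.I * m * C * w * z₂ / (C * τ + D)))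
      (Complex.exp (-2 * Real.pi * Complex.I * m * C * z₁ * z₂ / (C * τ + D)) *
        (-2 * Real.pi * Complex.I * m * C * 1 * z₂ / (C * τ + D))) z₁ :=
    ((((hasDerivAt_id z₁).const_mul (-2 * Real.pi * Complex.I * m * C)).mul_const z₂).div_const (C * τ + D)).cexp
  have hφ3 := hasDerivAt_comp3 hφ
    (hasDerivAt_const z₁ ((A * τ + B) / (C * τ + D)))
    ((hasDerivAt_id z₁).div_const (C * τ + D))
    (hasDerivAt_const z₁ (z₂ / (C * τ + D)))
    (show (fun _ : ℂ => (A * τ + B) / (C * τ + D)) z₁ = (A * τ + B) / (C * τ + D) from rfl)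
    (show (fun w : ℂ => w / (C * τ + D)) z₁ = z₁ / (C * τ + D) from rfl)
    (show (fun _ : ℂ => z₂ / (C * τ + D)) z₁ = z₂ / (C * τ + D) from rfl)
  have H3 : deriv (fun w => (C * τ + D) ^ (-k) *
      Complex.exp (-2 * Real.pi * Complex.I * m * C * w * z₂ / (C * τ + D)) *
      φ ((A * τ + B) / (C * τ + D)) (w / (C * τ + D)) (z₂ / (C * τ + D))) z₁ = _ :=
    ((hexp3.const_mul ((C * τ + D) ^ (-k))).mul hφ3).deriv
  -- mixed derivative: first the inner derivative as a function of w
  have HG : (fun w => deriv (fun u => (C * τ + D) ^ (-k) *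
        Complex.exp (-2 * Real.pi * Complex.I * m * C * u * w / (C * τ + D)) *
        φ ((A * τ + B) / (C * τ + D)) (u / (C * τ + D)) (w / (C * τ + D))) z₁)
      = (fun w => (C * τ + D) ^ (-k) *
        Complex.exp (-2 * Real.pi * Complex.I * m * C * z₁ * w / (C * τ + D)) *
        (-2 * Real.pi * Complex.I * m * C * w / (C * τ + D) *
            φ ((A * τ + B) / (C * τ + D)) (z₁ / (C * τ + D)) (w / (C * τ + D))
          + deriv (fun v => φ ((A * τ + B) / (C * τ + D)) v (w / (C * τ + D))) (z₁ / (C * τ + D))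
              * (1 / (C * τ + D)))) := by
    funext w
    have hexpu : HasDerivAt (fun u => Complex.exp (-2 * Real.pi * Complex.I * m * C * u * w / (C * τ + D)))
        (Complex.exp (-2 * Real.pi * Complex.I * m * C * z₁ * w / (C * τ + D)) *
          (-2 * Real.pi * Complex.I * m * C * 1 * w / (C * τ + D))) z₁ :=
      ((((hasDerivAt_id z₁).const_mul (-2 * Real.pi * Complex.I * m * C)).mul_const w).div_const (C * τ + D)).cexp
    have hφu := hasDerivAt_comp3 hφ
      (hasDerivAt_const z₁ ((A * τ + B) / (C * τ + D)))
      ((hasDerivAt_id z₁).div_const (C * τ + D))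
      (hasDerivAt_const z₁ (w / (C * τ + D)))
      (show (fun _ : ℂ => (A * τ + B) / (C * τ + D)) z₁ = (A * τ + B) / (C * τ + D) from rfl)
      (show (fun u : ℂ => u / (C * τ + D)) z₁ = z₁ / (C * τ + D) from rfl)
      (show (fun _ : ℂ => w / (C * τ + D)) z₁ = w / (C * τ + D) from rfl)
    have hGu : deriv (fun u => (C * τ + D) ^ (-k) *
        Complex.exp (-2 * Real.pi * Complex.I * m * C * u * w / (C * τ + D)) *
        φ ((A * τ + B) / (C * τ + D)) (u / (C * τ + D)) (w / (C * τ + D))) z₁ = _ :=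
      ((hexpu.const_mul ((C * τ + D) ^ (-k))).mul hφu).deriv
    rw [hGu]
    simp only [id_eq]
    beta_reduce
    ring
  rw [HG]
  -- now differentiate the explicit formula in w at z₂
  have hparam : Differentiable ℂ
      (fun x => deriv (fun v => φ ((A * τ + B) / (C * τ + D)) v x) (z₁ / (C * τ + D))) :=
    differentiable_param_deriv
      (hφ.comp ((differentiable_const ((A * τ + B) / (C * τ + D))).prodMk differentiable_id))
      (z₁ / (C * τ + D))
  have hcomp : HasDerivAt (fun w => deriv (fun v => φ ((A * τ + B) / (C * τ + D)) v (w / (C * τ + D))) (z₁ / (C * τ + D)))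
      (deriv (fun x => deriv (fun v => φ ((A * τ + B) / (C * τ + D)) v x) (z₁ / (C * τ + D))) (z₂ / (C * τ + D))
        * (1 / (C * τ + D))) z₂ :=
    (hparam _).hasDerivAt.comp z₂ ((hasDerivAt_id z₂).div_const (C * τ + D))
  have hlin : HasDerivAt (fun w => -2 * Real.pi * Complex.I * m * C * w / (C * τ + D))
      (-2 * Real.pi * Complex.I * m * C * 1 / (C * τ + D)) z₂ :=
    ((hasDerivAt_id z₂).const_mul (-2 * Real.pi * Complex.I * m * C)).div_const (C * τ + D)
  have hφ4 := hasDerivAt_comp3 hφ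
    (hasDerivAt_const z₂ ((A * τ + B) / (C * τ + D)))
    (hasDerivAt_const z₂ (z₁ / (C * τ + D)))
    ((hasDerivAt_id z₂).div_const (C * τ + D))
    (show (fun _ : ℂ => (A * τ + B) / (C * τ + D)) z₂ = (A * τ + B) / (C * τ + D) from rfl)
    (show (fun _ : ℂ => z₁ / (C * τ + D)) z₂ = z₁ / (C * τ + D) from rfl)
    (show (fun w : ℂ => w / (C * τ + D)) z₂ = z₂ / (C * τ + D) from rfl)
  have H4 : deriv (fun w => (C * τ + D) ^ (-k) *
      Complex.exp (-2 * Real.pi * Complex.I * m * C * z₁ * w / (C * τ + D)) *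
      (-2 * Real.pi * Complex.I * m * C * w / (C * τ + D) *
          φ ((A * τ + B) / (C * τ + D)) (z₁ / (C * τ + D)) (w / (C * τ + D))
        + deriv (fun v => φ ((A * τ + B) / (C * τ + D)) v (w / (C * τ + D))) (z₁ / (C * τ + D))
            * (1 / (C * τ + D)))) z₂ = _ :=
    ((hexp2.const_mul ((C * τ + D) ^ (-k))).mul
      ((hlin.mul hφ4).add (hcomp.mul_const (1 / (C * τ + D))))).deriv
  rw [H1, H2, H3, H4]
  -- zpow bookkeeping
  have e1pow : (C * τ + D) ^ (-k - 1) = (C * τ + D) ^ (-k) * (C * τ + D)⁻¹ :=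
    zpow_sub_one₀ hJ (-k)
  have e2pow : (C * τ + D) ^ (-(k + 2)) = (C * τ + D) ^ (-k) * ((C * τ + D) ^ 2)⁻¹ := by
    rw [show -(k + 2) = -k + -2 by ring, zpow_add₀ hJ]
    congr 1
  simp only [id_eq, Pi.mul_apply, Pi.add_apply]
  beta_reduce
  rw [e1pow, e2pow]
  have hcast : ((-k : ℤ) : ℂ) = -(k : ℂ) := by push_cast; ring
  rw [hcast]
  generalize deriv (fun x => deriv (fun v => φ ((A * τ + B) / (C * τ + D)) v x) (z₁ / (C * τ + D))) (z₂ / (C * τ + D)) = Q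
  generalize deriv (fun v => φ v (z₁ / (C * τ + D)) (z₂ / (C * τ + D))) ((A * τ + B) / (C * τ + D)) = P1
  generalize deriv (fun v => φ ((A * τ + B) / (C * τ + D)) v (z₂ / (C * τ + D))) (z₁ / (C * τ + D)) = P2
  generalize deriv (fun v => φ ((A * τ + B) / (C * τ + D)) (z₁ / (C * τ + D)) v) (z₂ / (C * τ + D)) = P3
  generalize φ ((A * τ + B) / (C * τ + D)) (z₁ / (C * τ + D)) (z₂ / (C * τ + D)) = F0
  generalize Complex.exp (-2 * Real.pi * Complex.I * m * C * z₁ * z₂ / (C * τ + D)) = E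
  generalize (C * τ + D) ^ (-k) = P
  generalize hJv : C * τ + D = Jv
  rw [hJv] at hJ
  field_simp
  ring


theorem heatOp_slash_commute (k m : ℤ) (φ : ℂ → ℂ → ℂ → ℂ)
    (hφ : Differentiable ℂ (fun p : ℂ × ℂ × ℂ => φ p.1 p.2.1 p.2.2))
    (M : Matrix.SpecialLinearGroup (Fin 2) ℝ) :
    ∀ τ z₁ z₂ : ℂ, 0 < τ.im → z₁ ≠ 0 → z₂ ≠ 0 →
      heatOp k m (hermSlash k m M φ) τ z₁ z₂ =
        hermSlash (k + 2) m M (heatOp k m φ) τ z₁ z₂ := by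
  intro τ z₁ z₂ hτ h1 h2
  have hdetR : (M 0 0 : ℝ) * (M 1 1 : ℝ) - (M 0 1 : ℝ) * (M 1 0 : ℝ) = 1 := by
    have h := M.2
    rw [Matrix.det_fin_two] at h
    exact h
  have hdet : ((M 0 0 : ℝ) : ℂ) * ((M 1 1 : ℝ) : ℂ) - ((M 0 1 : ℝ) : ℂ) * ((M 1 0 : ℝ) : ℂ) = 1 := by
    exact_mod_cast hdetR
  have hJ : ((M 1 0 : ℝ) : ℂ) * τ + ((M 1 1 : ℝ) : ℂ) ≠ 0 := by
    intro h0
    by_cases hc : (M 1 0 : ℝ) = 0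
    · have hd : (M 1 1 : ℝ) = 0 := by exact_mod_cast (by simpa [hc] using h0)
      rw [hc, hd] at hdetR
      simp at hdetR
    · have him := congrArg Complex.im h0
      simp [Complex.add_im, Complex.mul_im] at him
      rcases him with him | him
      · exact hc him
      · exact absurd him (ne_of_gt hτ)
  exact aux_slash k m φ hφ ((M 0 0 : ℝ) : ℂ) ((M 0 1 : ℝ) : ℂ) ((M 1 0 : ℝ) : ℂ)
    ((M 1 1 : ℝ) : ℂ) τ z₁ z₂ hdet hJ h1 h2
end

section
/- Let k ≥ 4 and ν ≥ 0 be integers and let ξ_μ (0 ≤ μ ≤ ν) and χ_{μ,μ} (0 ≤ μ ≤ ν) be smooth functions related by ξ_μ = μ! Σ_{j=0}^{μ} (−4)^{μ−j} (8πim)^j ((k+2μ−j−2)!/(j!(k+μ−2)!)) χ^{(j)}_{μ−j,μ−j} for every 0 ≤ μ ≤ ν (where f^{(j)} denotes the j-th derivative). Then χ_{ν,ν} = (1/(ν! 4^ν)) Σ_{μ=0}^{ν} (−1)^{ν−μ} (8πim)^μ binom(ν,μ) ((k+2ν−2μ−1)(k+ν−μ−2)!/((k+2ν−μ−1)!)) ξ^{(μ)}_{ν−μ}.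 -/
open Complex Finset

set_option maxHeartbeats 2000000

private lemma itd_smooth {f : ℂ → ℂ} (hf : ContDiff ℂ ⊤ f) (j : ℕ) :
    ContDiff ℂ (⊤ : ℕ∞) (iteratedDeriv j f) := by
  rw [iteratedDeriv_eq_iterate]
  exact ContDiff.iterate_deriv j (hf.of_le le_top)

private lemma itd_const_mul (c : ℂ) {f : ℂ → ℂ} (hf : ContDiff ℂ (⊤ : ℕ∞) f) (n : ℕ) (x : ℂ) :
    iteratedDeriv n (fun z => c * f z) x = c * iteratedDeriv n f x := by
  rw [← iteratedDerivWithin_univ, ← iteratedDerivWithin_univ]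
  exact iteratedDerivWithin_const_mul (Set.mem_univ x) uniqueDiffOn_univ c
    ((hf.of_le (by exact_mod_cast le_top)).contDiffWithinAt)

private lemma itd_comp (n m : ℕ) (f : ℂ → ℂ) :
    iteratedDeriv n (iteratedDeriv m f) = iteratedDeriv (n + m) f := by
  induction n with
  | zero => simp
  | succ n ih =>
    rw [iteratedDeriv_succ, ih, Nat.add_right_comm, ← iteratedDeriv_succ]

private lemma itd_sum {ι : Type*} (t : Finset ι) (f : ι → ℂ → ℂ)
    (hf : ∀ i ∈ t, ContDiff ℂ (⊤ : ℕ∞) (f i)) (n : ℕ) (x : ℂ) :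
    iteratedDeriv n (fun z => ∑ i ∈ t, f i z) x = ∑ i ∈ t, iteratedDeriv n (f i) x := by
  induction t using Finset.cons_induction with
  | empty => simp [iteratedDeriv_eq_iterate, Function.iterate_fixed, deriv_const]
  | cons a t ha ih =>
    simp only [Finset.sum_cons]
    rw [← ih (fun i hi => hf i (Finset.mem_cons_of_mem hi))]
    rw [← iteratedDerivWithin_univ, ← iteratedDerivWithin_univ, ← iteratedDerivWithin_univ]
    exact iteratedDerivWithin_add (Set.mem_univ x) uniqueDiffOn_univ
      ((hf a (Finset.mem_cons_self a t)).of_le (by exact_mod_cast le_top)).contDiffWithinAt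
      ((ContDiff.sum (fun i hi => (hf i (Finset.mem_cons_of_mem hi)))).of_le (by exact_mod_cast le_top)).contDiffWithinAt

private lemma fact_ne (n : ℕ) : ((n.factorial : ℂ)) ≠ 0 :=
  Nat.cast_ne_zero.mpr n.factorial_ne_zero

private lemma pascal_sum (S : ℕ) (g : ℕ → ℂ) :
    ∑ μ ∈ range (S + 2), (-1 : ℂ) ^ μ * ((S + 1).choose μ) * g μ
      = ∑ μ ∈ range (S + 1), (-1 : ℂ) ^ μ * (S.choose μ) * (g μ - g (μ + 1)) := by
  have h1 : ∑ μ ∈ range (S + 1), (-1 : ℂ) ^ μ * (S.choose μ) * g μ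
      = ∑ μ ∈ range (S + 1), (-1 : ℂ) ^ (μ + 1) * (S.choose (μ + 1)) * g (μ + 1)
        + (-1 : ℂ) ^ 0 * (S.choose 0) * g 0 := by
    rw [Finset.sum_range_succ' (fun μ => (-1 : ℂ) ^ μ * (S.choose μ) * g μ) S]
    rw [Finset.sum_range_succ (fun μ => (-1 : ℂ) ^ (μ + 1) * (S.choose (μ + 1)) * g (μ + 1)) S]
    rw [Nat.choose_succ_self]
    push_cast
    ring
  rw [Finset.sum_range_succ' (fun μ => (-1 : ℂ) ^ μ * ((S + 1).choose μ) * g μ) (S + 1)]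
  have expand : ∀ k, (-1 : ℂ) ^ (k + 1) * (((S + 1).choose (k + 1) : ℕ) : ℂ) * g (k + 1)
      = (-1 : ℂ) ^ (k + 1) * (S.choose (k + 1)) * g (k + 1)
        + (-((-1 : ℂ) ^ k * (S.choose k) * g (k + 1))) := by
    intro k
    rw [Nat.choose_succ_succ]
    push_cast
    ring
  simp only [expand]
  rw [Finset.sum_add_distrib, Finset.sum_neg_distrib]
  simp only [mul_sub]
  rw [Finset.sum_sub_distrib]
  simp only [Nat.choose_zero_right, Nat.cast_one] at h1 ⊢
  linear_combination -h1

private lemma keyL (r : ℕ) : ∀ S x : ℕ,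
    ∑ μ ∈ range (S + 1), (-1 : ℂ) ^ μ * (S.choose μ) *
        (((x + μ).factorial : ℂ) / ((x + μ + r + 1).factorial : ℂ))
      = ((S + r).factorial : ℂ) / (r.factorial : ℂ) *
          ((x.factorial : ℂ) / ((x + S + r + 1).factorial : ℂ)) := by
  intro S
  induction S with
  | zero => intro x; simp [div_self (fact_ne r)]
  | succ S ih =>
    intro x
    have hps := pascal_sum S (fun μ => ((x + μ).factorial : ℂ) / ((x + μ + r + 1).factorial : ℂ))
    rw [show S + 1 + 1 = S + 2 from rfl, hps]
    simp only [mul_sub]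
    rw [Finset.sum_sub_distrib]
    have e1 : ∀ μ : ℕ, x + (μ + 1) = x + 1 + μ := fun μ => by omega
    have hB : ∑ μ ∈ range (S + 1), (-1 : ℂ) ^ μ * (S.choose μ) *
        (((x + (μ + 1)).factorial : ℂ) / ((x + (μ + 1) + r + 1).factorial : ℂ))
        = ((S + r).factorial : ℂ) / (r.factorial : ℂ) *
          (((x + 1).factorial : ℂ) / ((x + 1 + S + r + 1).factorial : ℂ)) := by
      rw [← ih (x + 1)]
      exact Finset.sum_congr rfl fun μ _ => by rw [e1 μ]
    rw [ih x, hB]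
    have e2 : x + 1 + S + r + 1 = x + S + r + 2 := by omega
    have e3 : x + (S + 1) + r + 1 = x + S + r + 2 := by omega
    rw [e2, e3]
    have f1 : ((x + S + r + 2).factorial : ℂ)
        = ((x + S + r + 2 : ℕ) : ℂ) * ((x + S + r + 1).factorial : ℂ) := by
      rw [show x + S + r + 2 = (x + S + r + 1) + 1 from rfl, Nat.factorial_succ]
      push_cast; ring
    have f2 : ((x + 1).factorial : ℂ) = ((x + 1 : ℕ) : ℂ) * (x.factorial : ℂ) := by
      rw [Nat.factorial_succ]; push_cast; ring
    have f3 : ((S + 1 + r).factorial : ℂ) = ((S + r + 1 : ℕ) : ℂ) * ((S + r).factorial : ℂ) := by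
      rw [show S + 1 + r = (S + r) + 1 from by omega, Nat.factorial_succ]; push_cast; ring
    rw [f1, f2, f3]
    have hc : ((x + S + r + 2 : ℕ) : ℂ) = ((x + 1 : ℕ) : ℂ) + ((S + r + 1 : ℕ) : ℂ) := by
      push_cast; ring
    have h3 : ((x + 1 : ℕ) : ℂ) + ((S + r + 1 : ℕ) : ℂ) ≠ 0 := by
      rw [← hc]; exact Nat.cast_ne_zero.mpr (by omega)
    rw [hc]
    have h1 := fact_ne (x + S + r + 1)
    have h2 := fact_ne r
    generalize ((x + S + r + 1).factorial : ℂ) = A at h1 ⊢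
    generalize (r.factorial : ℂ) = B at h2 ⊢
    generalize ((x + 1 : ℕ) : ℂ) = a at h3 ⊢
    generalize ((S + r + 1 : ℕ) : ℂ) = b at h3 ⊢
    field_simp
    ring

private lemma key_add (S b : ℕ) :
    ∑ μ ∈ range (S + 2), (-1 : ℂ) ^ μ * ((S + 1).choose μ) * ((b + 1 + 2 * μ : ℕ) : ℂ) *
        (((b + μ).factorial : ℂ) / ((b + μ + S + 2).factorial : ℂ)) = 0 := by
  have split : ∀ μ ∈ range (S + 2),
      (-1 : ℂ) ^ μ * ((S + 1).choose μ) * ((b + 1 + 2 * μ : ℕ) : ℂ) *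
        (((b + μ).factorial : ℂ) / ((b + μ + S + 2).factorial : ℂ))
      = (-1 : ℂ) ^ μ * ((S + 1).choose μ) *
          (((b + 1 + μ).factorial : ℂ) / ((b + 1 + μ + S + 1).factorial : ℂ))
        + (-1 : ℂ) ^ μ * ((S + 1).choose μ) * (μ : ℂ) *
          (((b + μ).factorial : ℂ) / ((b + μ + S + 2).factorial : ℂ)) := by
    intro μ _
    have hf : ((b + 1 + μ).factorial : ℂ) = ((b + 1 + μ : ℕ) : ℂ) * ((b + μ).factorial : ℂ) := by
      rw [show b + 1 + μ = (b + μ) + 1 from by omega, Nat.factorial_succ]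
      push_cast; ring
    have he : b + 1 + μ + S + 1 = b + μ + S + 2 := by omega
    have hco : ((b + 1 + 2 * μ : ℕ) : ℂ) = ((b + 1 + μ : ℕ) : ℂ) + (μ : ℂ) := by
      push_cast; ring
    rw [hf, he, hco]
    ring
  rw [Finset.sum_congr rfl split, Finset.sum_add_distrib]
  have hA := keyL S (S + 1) (b + 1)
  have hB : ∑ μ ∈ range (S + 2), (-1 : ℂ) ^ μ * ((S + 1).choose μ) * (μ : ℂ) *
      (((b + μ).factorial : ℂ) / ((b + μ + S + 2).factorial : ℂ))
      = -((S : ℂ) + 1) * (((S + (S + 1)).factorial : ℂ) / (((S + 1).factorial : ℂ)) *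
          (((b + 1).factorial : ℂ) / ((b + 1 + S + (S + 1) + 1).factorial : ℂ))) := by
    rw [Finset.sum_range_succ' _ (S + 1), ← keyL (S + 1) S (b + 1), Finset.mul_sum]
    have h0 : (-1 : ℂ) ^ 0 * (((S + 1).choose 0 : ℕ) : ℂ) * ((0 : ℕ) : ℂ) *
        (((b + 0).factorial : ℂ) / ((b + 0 + S + 2).factorial : ℂ)) = 0 := by simp
    rw [h0, add_zero]
    refine Finset.sum_congr rfl fun ρ hρ => ?_
    have hch : ((S + 1 : ℕ) : ℂ) * ((S.choose ρ : ℕ) : ℂ)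
        = (((S + 1).choose (ρ + 1) : ℕ) : ℂ) * ((ρ + 1 : ℕ) : ℂ) := by
      rw [← Nat.cast_mul, ← Nat.cast_mul, Nat.add_one_mul_choose_eq]
    have e1 : b + (ρ + 1) = b + 1 + ρ := by omega
    have e2 : b + 1 + ρ + S + 2 = b + 1 + ρ + (S + 1) + 1 := by omega
    rw [e1, e2]
    push_cast at hch ⊢
    linear_combination ((-1 : ℂ) ^ ρ *
      (((b + 1 + ρ).factorial : ℂ) / ((b + 1 + ρ + (S + 1) + 1).factorial : ℂ))) * hch
  rw [show S + 2 = S + 1 + 1 from rfl, hA, hB]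
  rw [show S + (S + 1) = S + 1 + S from by omega,
    show b + 1 + S + (S + 1) + 1 = b + 1 + (S + 1) + S + 1 from by omega]
  have hfs : (((S + 1).factorial : ℕ) : ℂ) = ((S + 1 : ℕ) : ℂ) * ((S.factorial : ℕ) : ℂ) := by
    rw [Nat.factorial_succ]; push_cast; ring
  rw [hfs, show ((S + 1 : ℕ) : ℂ) = (S : ℂ) + 1 from by push_cast; ring]
  have h1 := fact_ne S
  have h2 := fact_ne (b + 1 + (S + 1) + S + 1)
  have h3 : (S : ℂ) + 1 ≠ 0 := by
    have : ((S + 1 : ℕ) : ℂ) ≠ 0 := Nat.cast_ne_zero.mpr (by omega)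
    push_cast at this; exact this
  generalize (S.factorial : ℂ) = B at h1 ⊢
  generalize ((b + 1 + (S + 1) + S + 1).factorial : ℂ) = D at h2 ⊢
  generalize (S : ℂ) + 1 = c at h3 ⊢
  field_simp
  ring

private lemma triangle_reindex (n : ℕ) (f : ℕ → ℕ → ℂ) :
    ∑ μ ∈ range (n + 1), ∑ j ∈ range (n - μ + 1), f μ j
      = ∑ s ∈ range (n + 1), ∑ μ ∈ range (s + 1), f μ (s - μ) := by
  rw [Finset.sum_sigma', Finset.sum_sigma']
  refine Finset.sum_nbij' (fun p => ⟨p.1 + p.2, p.1⟩) (fun q => ⟨q.2, q.1 - q.2⟩) ?_ ?_ ?_ ?_ ?_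
  · rintro ⟨a, b⟩ h
    simp only [Finset.mem_sigma, Finset.mem_range] at h ⊢
    omega
  · rintro ⟨a, b⟩ h
    simp only [Finset.mem_sigma, Finset.mem_range] at h ⊢
    omega
  · rintro ⟨a, b⟩ h
    show (⟨a, a + b - a⟩ : (_ : ℕ) × ℕ) = ⟨a, b⟩
    rw [Nat.add_sub_cancel_left]
  · rintro ⟨a, b⟩ h
    simp only [Finset.mem_sigma, Finset.mem_range] at h
    show (⟨b + (a - b), b⟩ : (_ : ℕ) × ℕ) = ⟨a, b⟩
    rw [show b + (a - b) = a from by omega]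
  · rintro ⟨a, b⟩ h
    show f a b = f a (a + b - a)
    rw [Nat.add_sub_cancel_left]

theorem inversion_of_Dnu_formula (k : ℕ) (hk : 4 ≤ k) (m : ℕ) (hm : 0 < m)
    (ν : ℕ) (ξ χ : ℕ → ℂ → ℂ)
    (hχ : ∀ μ, ContDiff ℂ ⊤ (χ μ))
    (hrel : ∀ μ ≤ ν, ∀ τ : ℂ,
      ξ μ τ = (μ.factorial : ℂ) *
        ∑ j ∈ range (μ + 1),
          (-4 : ℂ) ^ (μ - j) * (8 * Real.pi * Complex.I * m) ^ j *
            (((k + 2 * μ - j - 2).factorial : ℂ) /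
              ((j.factorial : ℂ) * ((k + μ - 2).factorial : ℂ))) *
            iteratedDeriv j (χ (μ - j)) τ) :
    ∀ τ : ℂ,
      χ ν τ = (1 / ((ν.factorial : ℂ) * 4 ^ ν)) *
        ∑ μ ∈ range (ν + 1),
          (-1 : ℂ) ^ (ν - μ) * (8 * Real.pi * Complex.I * m) ^ μ *
            (ν.choose μ : ℂ) *
            (((k + 2 * ν - 2 * μ - 1 : ℕ) : ℂ) * ((k + ν - μ - 2).factorial : ℂ) /
              ((k + 2 * ν - μ - 1).factorial : ℂ)) *
            iteratedDeriv μ (ξ (ν - μ)) τ := by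
  intro τ
  set A : ℂ := 8 * Real.pi * Complex.I * m with hAdef
  clear_value A
  have hsm : ∀ c j : ℕ, ContDiff ℂ (⊤ : ℕ∞) (iteratedDeriv j (χ c)) :=
    fun c j => itd_smooth (hχ c) j
  have hD : ∀ μ, μ ≤ ν → iteratedDeriv μ (ξ (ν - μ)) τ
      = ((ν - μ).factorial : ℂ) * ∑ j ∈ range (ν - μ + 1),
          ((-4 : ℂ) ^ (ν - μ - j) * A ^ j *
            (((k + 2 * (ν - μ) - j - 2).factorial : ℂ) /
              ((j.factorial : ℂ) * ((k + (ν - μ) - 2).factorial : ℂ))))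
            * iteratedDeriv (μ + j) (χ (ν - μ - j)) τ := by
    intro μ hμ
    have hfun : ξ (ν - μ) = fun x => ((ν - μ).factorial : ℂ) *
        ∑ j ∈ range (ν - μ + 1),
          (-4 : ℂ) ^ (ν - μ - j) * A ^ j *
            (((k + 2 * (ν - μ) - j - 2).factorial : ℂ) /
              ((j.factorial : ℂ) * ((k + (ν - μ) - 2).factorial : ℂ))) *
            iteratedDeriv j (χ (ν - μ - j)) x := funext (hrel (ν - μ) (by omega))
    rw [hfun]
    rw [itd_const_mul _ (ContDiff.sum fun j _ => (contDiff_const.mul (hsm _ j))) μ τ]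
    congr 1
    rw [itd_sum _ _ (fun j _ => contDiff_const.mul (hsm _ j)) μ τ]
    refine Finset.sum_congr rfl fun j _ => ?_
    rw [itd_const_mul _ (hsm _ j) μ τ]
    rw [show iteratedDeriv μ (iteratedDeriv j (χ (ν - μ - j))) τ
        = iteratedDeriv (μ + j) (χ (ν - μ - j)) τ from congrFun (itd_comp μ j _) τ]
  have hA0 : A ≠ 0 := by
    rw [hAdef]
    refine mul_ne_zero (mul_ne_zero (mul_ne_zero (by norm_num) ?_) Complex.I_ne_zero) ?_
    · exact Complex.ofReal_ne_zero.mpr Real.pi_ne_zero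
    · exact Nat.cast_ne_zero.mpr hm.ne'
  have step1 : ∀ μ ∈ range (ν + 1),
      (-1 : ℂ) ^ (ν - μ) * A ^ μ * (ν.choose μ : ℂ) *
          (((k + 2 * ν - 2 * μ - 1 : ℕ) : ℂ) * ((k + ν - μ - 2).factorial : ℂ) /
            ((k + 2 * ν - μ - 1).factorial : ℂ)) *
          iteratedDeriv μ (ξ (ν - μ)) τ
      = ∑ j ∈ range (ν - μ + 1),
          ((-1 : ℂ) ^ (ν - μ) * A ^ μ * (ν.choose μ : ℂ) *
            (((k + 2 * ν - 2 * μ - 1 : ℕ) : ℂ) * ((k + ν - μ - 2).factorial : ℂ) /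
              ((k + 2 * ν - μ - 1).factorial : ℂ)) * ((ν - μ).factorial : ℂ)) *
          (((-4 : ℂ) ^ (ν - μ - j) * A ^ j *
            (((k + 2 * (ν - μ) - j - 2).factorial : ℂ) /
              ((j.factorial : ℂ) * ((k + (ν - μ) - 2).factorial : ℂ)))) *
            iteratedDeriv (μ + j) (χ (ν - μ - j)) τ) := by
    intro μ hμ
    rw [hD μ (by have := Finset.mem_range.mp hμ; omega), Finset.mul_sum, Finset.mul_sum]
    exact Finset.sum_congr rfl fun j _ => by ring
  rw [Finset.sum_congr rfl step1]
  have hre : (∑ μ ∈ range (ν + 1), ∑ j ∈ range (ν - μ + 1),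
        ((-1 : ℂ) ^ (ν - μ) * A ^ μ * (ν.choose μ : ℂ) *
            (((k + 2 * ν - 2 * μ - 1 : ℕ) : ℂ) * ((k + ν - μ - 2).factorial : ℂ) /
              ((k + 2 * ν - μ - 1).factorial : ℂ)) * ((ν - μ).factorial : ℂ)) *
          (((-4 : ℂ) ^ (ν - μ - j) * A ^ j *
            (((k + 2 * (ν - μ) - j - 2).factorial : ℂ) /
              ((j.factorial : ℂ) * ((k + (ν - μ) - 2).factorial : ℂ)))) *
            iteratedDeriv (μ + j) (χ (ν - μ - j)) τ))
      = ∑ s ∈ range (ν + 1), ∑ μ ∈ range (s + 1),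
          ((-1 : ℂ) ^ (ν - μ) * A ^ μ * (ν.choose μ : ℂ) *
            (((k + 2 * ν - 2 * μ - 1 : ℕ) : ℂ) * ((k + ν - μ - 2).factorial : ℂ) /
              ((k + 2 * ν - μ - 1).factorial : ℂ)) * ((ν - μ).factorial : ℂ)) *
          (((-4 : ℂ) ^ (ν - μ - (s - μ)) * A ^ (s - μ) *
            (((k + 2 * (ν - μ) - (s - μ) - 2).factorial : ℂ) /
              (((s - μ).factorial : ℂ) * ((k + (ν - μ) - 2).factorial : ℂ)))) *
            iteratedDeriv (μ + (s - μ)) (χ (ν - μ - (s - μ))) τ) :=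
    triangle_reindex ν (fun μ j =>
      ((-1 : ℂ) ^ (ν - μ) * A ^ μ * (ν.choose μ : ℂ) *
            (((k + 2 * ν - 2 * μ - 1 : ℕ) : ℂ) * ((k + ν - μ - 2).factorial : ℂ) /
              ((k + 2 * ν - μ - 1).factorial : ℂ)) * ((ν - μ).factorial : ℂ)) *
          (((-4 : ℂ) ^ (ν - μ - j) * A ^ j *
            (((k + 2 * (ν - μ) - j - 2).factorial : ℂ) /
              ((j.factorial : ℂ) * ((k + (ν - μ) - 2).factorial : ℂ)))) *
            iteratedDeriv (μ + j) (χ (ν - μ - j)) τ))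
  rw [hre]
  have h0 : (∑ μ ∈ range (0 + 1),
        ((-1 : ℂ) ^ (ν - 0) * A ^ 0 * (ν.choose 0 : ℂ) *
            (((k + 2 * ν - 2 * 0 - 1 : ℕ) : ℂ) * ((k + ν - 0 - 2).factorial : ℂ) /
              ((k + 2 * ν - 0 - 1).factorial : ℂ)) * ((ν - 0).factorial : ℂ)) *
          (((-4 : ℂ) ^ (ν - 0 - (0 - 0)) * A ^ (0 - 0) *
            (((k + 2 * (ν - 0) - (0 - 0) - 2).factorial : ℂ) /
              (((0 - 0).factorial : ℂ) * ((k + (ν - 0) - 2).factorial : ℂ)))) *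
            iteratedDeriv (0 + (0 - 0)) (χ (ν - 0 - (0 - 0))) τ)) = (ν.factorial : ℂ) * 4 ^ ν * χ ν τ := by
    rw [Finset.sum_range_one]
    simp only [Nat.sub_self, Nat.sub_zero, Nat.mul_zero, Nat.add_zero, pow_zero,
      Nat.choose_zero_right, Nat.cast_one, Nat.factorial_zero, one_mul, mul_one,
      iteratedDeriv_zero]
    have hf1 : ((k + 2 * ν - 1).factorial : ℂ)
        = ((k + 2 * ν - 1 : ℕ) : ℂ) * ((k + 2 * ν - 2).factorial : ℂ) := by
      have e : k + 2 * ν - 1 = (k + 2 * ν - 2) + 1 := by omega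
      rw [e, Nat.factorial_succ]; push_cast; ring
    rw [hf1, show (-1 : ℂ) ^ ν = 4 ^ ν / (-4 : ℂ) ^ ν from by
      rw [eq_div_iff (pow_ne_zero _ (by norm_num : (-4 : ℂ) ≠ 0)), ← mul_pow]; norm_num]
    have hne1 : ((k + 2 * ν - 1 : ℕ) : ℂ) ≠ 0 := Nat.cast_ne_zero.mpr (by omega)
    have hne2 := fact_ne (k + 2 * ν - 2)
    have hne3 := fact_ne (k + ν - 2)
    have hne4 : (-4 : ℂ) ^ ν ≠ 0 := pow_ne_zero _ (by norm_num)
    generalize ((k + 2 * ν - 1 : ℕ) : ℂ) = X at hne1 ⊢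
    generalize ((k + 2 * ν - 2).factorial : ℂ) = F2 at hne2 ⊢
    generalize ((k + ν - 2).factorial : ℂ) = F3 at hne3 ⊢
    field_simp
  have hzero : ∀ s ∈ range (ν + 1), s ≠ 0 → (∑ μ ∈ range (s + 1),
      ((-1 : ℂ) ^ (ν - μ) * A ^ μ * (ν.choose μ : ℂ) *
            (((k + 2 * ν - 2 * μ - 1 : ℕ) : ℂ) * ((k + ν - μ - 2).factorial : ℂ) /
              ((k + 2 * ν - μ - 1).factorial : ℂ)) * ((ν - μ).factorial : ℂ)) *
          (((-4 : ℂ) ^ (ν - μ - (s - μ)) * A ^ (s - μ) *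
            (((k + 2 * (ν - μ) - (s - μ) - 2).factorial : ℂ) /
              (((s - μ).factorial : ℂ) * ((k + (ν - μ) - 2).factorial : ℂ)))) *
            iteratedDeriv (μ + (s - μ)) (χ (ν - μ - (s - μ))) τ)) = 0 := by
    intro s hs hs0
    obtain ⟨S, rfl⟩ : ∃ S, s = S + 1 := ⟨s - 1, by omega⟩
    have hsν : S + 1 ≤ ν := by have := Finset.mem_range.mp hs; omega
    obtain ⟨t, ht⟩ : ∃ t, ν = S + 1 + t := ⟨ν - (S + 1), by omega⟩
    obtain ⟨b, hb⟩ : ∃ b, k + 2 * ν = b + 2 * (S + 1) + 2 := ⟨k + 2 * ν - 2 * (S + 1) - 2, by omega⟩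
    have hrefl : (∑ μ ∈ range (S + 1 + 1),
          ((-1 : ℂ) ^ (ν - (S + 1 - μ)) * A ^ (S + 1 - μ) * (ν.choose (S + 1 - μ) : ℂ) *
            (((k + 2 * ν - 2 * (S + 1 - μ) - 1 : ℕ) : ℂ) * ((k + ν - (S + 1 - μ) - 2).factorial : ℂ) /
              ((k + 2 * ν - (S + 1 - μ) - 1).factorial : ℂ)) * ((ν - (S + 1 - μ)).factorial : ℂ)) *
          (((-4 : ℂ) ^ (ν - (S + 1 - μ) - ((S + 1) - (S + 1 - μ))) * A ^ ((S + 1) - (S + 1 - μ)) *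
            (((k + 2 * (ν - (S + 1 - μ)) - ((S + 1) - (S + 1 - μ)) - 2).factorial : ℂ) /
              ((((S + 1) - (S + 1 - μ)).factorial : ℂ) * ((k + (ν - (S + 1 - μ)) - 2).factorial : ℂ)))) *
            iteratedDeriv ((S + 1 - μ) + ((S + 1) - (S + 1 - μ))) (χ (ν - (S + 1 - μ) - ((S + 1) - (S + 1 - μ)))) τ))
        = ∑ μ ∈ range (S + 1 + 1),
          ((-1 : ℂ) ^ (ν - μ) * A ^ μ * (ν.choose μ : ℂ) *
            (((k + 2 * ν - 2 * μ - 1 : ℕ) : ℂ) * ((k + ν - μ - 2).factorial : ℂ) /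
              ((k + 2 * ν - μ - 1).factorial : ℂ)) * ((ν - μ).factorial : ℂ)) *
          (((-4 : ℂ) ^ (ν - μ - ((S + 1) - μ)) * A ^ ((S + 1) - μ) *
            (((k + 2 * (ν - μ) - ((S + 1) - μ) - 2).factorial : ℂ) /
              ((((S + 1) - μ).factorial : ℂ) * ((k + (ν - μ) - 2).factorial : ℂ)))) *
            iteratedDeriv (μ + ((S + 1) - μ)) (χ (ν - μ - ((S + 1) - μ))) τ) :=
      Finset.sum_range_reflect (fun μ =>
        ((-1 : ℂ) ^ (ν - μ) * A ^ μ * (ν.choose μ : ℂ) *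
            (((k + 2 * ν - 2 * μ - 1 : ℕ) : ℂ) * ((k + ν - μ - 2).factorial : ℂ) /
              ((k + 2 * ν - μ - 1).factorial : ℂ)) * ((ν - μ).factorial : ℂ)) *
          (((-4 : ℂ) ^ (ν - μ - ((S + 1) - μ)) * A ^ ((S + 1) - μ) *
            (((k + 2 * (ν - μ) - ((S + 1) - μ) - 2).factorial : ℂ) /
              ((((S + 1) - μ).factorial : ℂ) * ((k + (ν - μ) - 2).factorial : ℂ)))) *
            iteratedDeriv (μ + ((S + 1) - μ)) (χ (ν - μ - ((S + 1) - μ))) τ)) (S + 1 + 1)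
    rw [← hrefl]
    have hper : ∀ μ ∈ range (S + 1 + 1),
        (((-1 : ℂ) ^ (ν - (S + 1 - μ)) * A ^ (S + 1 - μ) * (ν.choose (S + 1 - μ) : ℂ) *
            (((k + 2 * ν - 2 * (S + 1 - μ) - 1 : ℕ) : ℂ) * ((k + ν - (S + 1 - μ) - 2).factorial : ℂ) /
              ((k + 2 * ν - (S + 1 - μ) - 1).factorial : ℂ)) * ((ν - (S + 1 - μ)).factorial : ℂ)) *
          (((-4 : ℂ) ^ (ν - (S + 1 - μ) - ((S + 1) - (S + 1 - μ))) * A ^ ((S + 1) - (S + 1 - μ)) *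
            (((k + 2 * (ν - (S + 1 - μ)) - ((S + 1) - (S + 1 - μ)) - 2).factorial : ℂ) /
              ((((S + 1) - (S + 1 - μ)).factorial : ℂ) * ((k + (ν - (S + 1 - μ)) - 2).factorial : ℂ)))) *
            iteratedDeriv ((S + 1 - μ) + ((S + 1) - (S + 1 - μ))) (χ (ν - (S + 1 - μ) - ((S + 1) - (S + 1 - μ)))) τ))
        = (((ν.factorial : ℂ) / (((S + 1).factorial : ℕ) : ℂ) * 4 ^ t * A ^ (S + 1)) *
            ((-1 : ℂ) ^ μ * (((S + 1).choose μ : ℕ) : ℂ) * ((b + 1 + 2 * μ : ℕ) : ℂ) *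
              (((b + μ).factorial : ℂ) / ((b + μ + S + 2).factorial : ℂ)))) *
          iteratedDeriv (S + 1) (χ t) τ := by
      intro μ hμr
      have hμ : μ ≤ S + 1 := by have := Finset.mem_range.mp hμr; omega
      have w0 : S + 1 - (S + 1 - μ) = μ := by omega
      rw [w0]
      have w1 : ν - (S + 1 - μ) = t + μ := by omega
      rw [w1]
      have w5 : t + μ - μ = t := by omega
      rw [w5]
      have w2 : k + 2 * ν - 2 * (S + 1 - μ) - 1 = b + 1 + 2 * μ := by omega
      rw [w2]
      have w3 : k + ν - (S + 1 - μ) - 2 = k + (t + μ) - 2 := by omega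
      rw [w3]
      have w4 : k + 2 * ν - (S + 1 - μ) - 1 = b + μ + S + 2 := by omega
      rw [w4]
      have w6 : k + 2 * (t + μ) - μ - 2 = b + μ := by omega
      rw [w6]
      have w7 : S + 1 - μ + μ = S + 1 := by omega
      rw [w7]
      have hCν : ((ν.choose (S + 1 - μ) : ℕ) : ℂ)
          = (ν.factorial : ℂ) / (((S + 1 - μ).factorial : ℂ) * ((t + μ).factorial : ℂ)) := by
        rw [eq_div_iff (mul_ne_zero (fact_ne _) (fact_ne _))]
        have hnat : ν.choose (S + 1 - μ) * ((S + 1 - μ).factorial * (t + μ).factorial)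
            = ν.factorial := by
          have h := Nat.choose_mul_factorial_mul_factorial (show S + 1 - μ ≤ ν by omega)
          rw [w1] at h
          rw [← h]; ring
        exact_mod_cast hnat
      have hCs : (((S + 1).choose μ : ℕ) : ℂ)
          = (((S + 1).factorial : ℕ) : ℂ) / ((μ.factorial : ℂ) * ((S + 1 - μ).factorial : ℂ)) := by
        rw [eq_div_iff (mul_ne_zero (fact_ne _) (fact_ne _))]
        have hnat : (S + 1).choose μ * (μ.factorial * (S + 1 - μ).factorial)
            = (S + 1).factorial := by
          have h := Nat.choose_mul_factorial_mul_factorial hμ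
          rw [← h]; ring
        exact_mod_cast hnat
      rw [hCν, hCs]
      rw [pow_add (-1 : ℂ) t μ]
      rw [show (4 : ℂ) ^ t = (-1 : ℂ) ^ t * (-4 : ℂ) ^ t from by rw [← mul_pow]; norm_num]
      rw [show A ^ (S + 1) = A ^ (S + 1 - μ) * A ^ μ from by rw [← pow_add, w7]]
      have n1 := fact_ne (S + 1 - μ)
      have n2 := fact_ne (t + μ)
      have n3 := fact_ne μ
      have n4 := fact_ne (b + μ + S + 2)
      have n5 := fact_ne (k + (t + μ) - 2)
      have n6 := fact_ne (S + 1)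
      have n7 : A ^ μ ≠ 0 := pow_ne_zero _ hA0
      have n8 : (-4 : ℂ) ^ t ≠ 0 := pow_ne_zero _ (by norm_num)
      generalize ((t + μ).factorial : ℂ) = Ft at n2 ⊢
      generalize ((S + 1 - μ).factorial : ℂ) = Fs at n1 ⊢
      generalize (μ.factorial : ℂ) = Fm at n3 ⊢
      generalize ((b + μ + S + 2).factorial : ℂ) = Fb at n4 ⊢
      generalize ((k + (t + μ) - 2).factorial : ℂ) = Fk at n5 ⊢
      generalize (((S + 1).factorial : ℕ) : ℂ) = F1 at n6 ⊢
      field_simp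
    rw [Finset.sum_congr rfl hper, ← Finset.sum_mul, ← Finset.mul_sum,
      show S + 1 + 1 = S + 2 from rfl, key_add S b, mul_zero, zero_mul]
  have hfin : (∑ s ∈ range (ν + 1), ∑ μ ∈ range (s + 1),
        ((-1 : ℂ) ^ (ν - μ) * A ^ μ * (ν.choose μ : ℂ) *
            (((k + 2 * ν - 2 * μ - 1 : ℕ) : ℂ) * ((k + ν - μ - 2).factorial : ℂ) /
              ((k + 2 * ν - μ - 1).factorial : ℂ)) * ((ν - μ).factorial : ℂ)) *
          (((-4 : ℂ) ^ (ν - μ - (s - μ)) * A ^ (s - μ) *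
            (((k + 2 * (ν - μ) - (s - μ) - 2).factorial : ℂ) /
              (((s - μ).factorial : ℂ) * ((k + (ν - μ) - 2).factorial : ℂ)))) *
            iteratedDeriv (μ + (s - μ)) (χ (ν - μ - (s - μ))) τ))
      = ∑ μ ∈ range (0 + 1),
        ((-1 : ℂ) ^ (ν - 0) * A ^ 0 * (ν.choose 0 : ℂ) *
            (((k + 2 * ν - 2 * 0 - 1 : ℕ) : ℂ) * ((k + ν - 0 - 2).factorial : ℂ) /
              ((k + 2 * ν - 0 - 1).factorial : ℂ)) * ((ν - 0).factorial : ℂ)) *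
          (((-4 : ℂ) ^ (ν - 0 - (0 - 0)) * A ^ (0 - 0) *
            (((k + 2 * (ν - 0) - (0 - 0) - 2).factorial : ℂ) /
              (((0 - 0).factorial : ℂ) * ((k + (ν - 0) - 2).factorial : ℂ)))) *
            iteratedDeriv (0 + (0 - 0)) (χ (ν - 0 - (0 - 0))) τ) :=
    Finset.sum_eq_single_of_mem 0 (Finset.mem_range.mpr (Nat.succ_pos ν)) hzero
  rw [hfin, h0]
  have hν := fact_ne ν
  have h4 : (4 : ℂ) ^ ν ≠ 0 := pow_ne_zero _ (by norm_num)
  field_simp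
end

section
/- Let m₁, m₂ be positive integers and φ, ψ : ℍ × ℂ² → ℂ holomorphic functions satisfying for all λ, μ ∈ ℤ[i]: φ(τ, z₁ + λτ + μ, z₂ + conj(λ)τ + conj(μ)) = exp(−2πi m₁(N(λ)τ + conj(λ)z₁ + λz₂)) φ(τ,z₁,z₂), and the analogous equation for ψ with index m₂. Then the function F = m₁ φ ∂ψ/∂z₂ − m₂ ψ ∂φ/∂z₂ satisfies the analogous translation equation with index m₁ + m₂, i.e., F(τ, z₁ + λτ + μ, z₂ + conj(λ)τ + conj(μ)) = exp(−2πi(m₁+m₂)(N(λ)τ + conj(λ)z₁ + λz₂)) F(τ,z₁,z₂) for all λ, μ ∈ ℤ[i]. -/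
lemma aux_deriv_exp_linear_mul (A K : ℂ) (g : ℂ → ℂ) (hg : Differentiable ℂ g) (z : ℂ) :
    deriv (fun w => Complex.exp (A + K * w) * g w) z
      = Complex.exp (A + K * z) * (K * g z + deriv g z) := by
  have h0 : HasDerivAt (fun w : ℂ => A + K * w) K z := by
    simpa using ((hasDerivAt_id z).const_mul K).const_add A
  have h1 : HasDerivAt (fun w : ℂ => Complex.exp (A + K * w))
      (Complex.exp (A + K * z) * K) z := h0.cexp
  have h2 := (hg z).hasDerivAt
  rw [(h1.fun_mul h2).deriv]
  ring

lemma aux_shift_deriv (m : ℕ) (f : ℂ → ℂ → ℂ → ℂ)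
    (hfd : ∀ τ z₁ : ℂ, Differentiable ℂ (f τ z₁))
    (a b c d : ℤ) (τ z₁ z₂ : ℂ)
    (hf : ∀ w : ℂ,
      f τ (z₁ + ((a : ℂ) + (b : ℂ) * Complex.I) * τ + ((c : ℂ) + (d : ℂ) * Complex.I))
        (w + (starRingEnd ℂ) ((a : ℂ) + (b : ℂ) * Complex.I) * τ +
          (starRingEnd ℂ) ((c : ℂ) + (d : ℂ) * Complex.I)) =
      Complex.exp (-2 * Real.pi * Complex.I * m *
        ((Complex.normSq ((a : ℂ) + (b : ℂ) * Complex.I) : ℂ) * τ +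
          (starRingEnd ℂ) ((a : ℂ) + (b : ℂ) * Complex.I) * z₁ +
          ((a : ℂ) + (b : ℂ) * Complex.I) * w)) * f τ z₁ w) :
    deriv (f τ (z₁ + ((a : ℂ) + (b : ℂ) * Complex.I) * τ + ((c : ℂ) + (d : ℂ) * Complex.I)))
      (z₂ + (starRingEnd ℂ) ((a : ℂ) + (b : ℂ) * Complex.I) * τ +
          (starRingEnd ℂ) ((c : ℂ) + (d : ℂ) * Complex.I)) =
    Complex.exp (-2 * Real.pi * Complex.I * m *
        ((Complex.normSq ((a : ℂ) + (b : ℂ) * Complex.I) : ℂ) * τ +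
          (starRingEnd ℂ) ((a : ℂ) + (b : ℂ) * Complex.I) * z₁ +
          ((a : ℂ) + (b : ℂ) * Complex.I) * z₂)) *
      ((-2 * Real.pi * Complex.I * m * ((a : ℂ) + (b : ℂ) * Complex.I)) * f τ z₁ z₂
        + deriv (f τ z₁) z₂) := by
  set lc := (a : ℂ) + (b : ℂ) * Complex.I
  set mc := (c : ℂ) + (d : ℂ) * Complex.I
  set s := (starRingEnd ℂ) lc * τ + (starRingEnd ℂ) mc with hs
  set A := -2 * Real.pi * Complex.I * m *
      ((Complex.normSq lc : ℂ) * τ + (starRingEnd ℂ) lc * z₁) with hA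
  set K := -2 * Real.pi * Complex.I * m * lc with hK
  have h1 : z₂ + (starRingEnd ℂ) lc * τ + (starRingEnd ℂ) mc = z₂ + s := by
    rw [hs]; ring
  rw [h1, ← deriv_comp_add_const (f τ (z₁ + lc * τ + mc)) s z₂]
  have h2 : (fun w => f τ (z₁ + lc * τ + mc) (w + s)) =
      fun w => Complex.exp (A + K * w) * f τ z₁ w := by
    funext w
    have := hf w
    rw [show w + s = w + (starRingEnd ℂ) lc * τ + (starRingEnd ℂ) mc by rw [hs]; ring] at *
    rw [this]
    congr 1
    rw [hA, hK]; ring_nf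
  rw [h2, aux_deriv_exp_linear_mul A K _ (hfd τ z₁)]
  congr 1
  rw [hA, hK]; ring_nf


open Complex

theorem derivative_construction_translation (m₁ m₂ : ℕ) (hm₁ : 0 < m₁) (hm₂ : 0 < m₂)
    (φ ψ : ℂ → ℂ → ℂ → ℂ)
    (hφd : ∀ τ z₁ : ℂ, Differentiable ℂ (φ τ z₁))
    (hψd : ∀ τ z₁ : ℂ, Differentiable ℂ (ψ τ z₁))
    (hφ : ∀ a b c d : ℤ, ∀ τ z₁ z₂ : ℂ,
      φ τ (z₁ + ((a : ℂ) + (b : ℂ) * Complex.I) * τ + ((c : ℂ) + (d : ℂ) * Complex.I))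
        (z₂ + (starRingEnd ℂ) ((a : ℂ) + (b : ℂ) * Complex.I) * τ +
          (starRingEnd ℂ) ((c : ℂ) + (d : ℂ) * Complex.I)) =
      Complex.exp (-2 * Real.pi * Complex.I * m₁ *
        ((Complex.normSq ((a : ℂ) + (b : ℂ) * Complex.I) : ℂ) * τ +
          (starRingEnd ℂ) ((a : ℂ) + (b : ℂ) * Complex.I) * z₁ +
          ((a : ℂ) + (b : ℂ) * Complex.I) * z₂)) * φ τ z₁ z₂)
    (hψ : ∀ a b c d : ℤ, ∀ τ z₁ z₂ : ℂ,
      ψ τ (z₁ + ((a : ℂ) + (b : ℂ) * Complex.I) * τ + ((c : ℂ) + (d : ℂ) * Complex.I))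
        (z₂ + (starRingEnd ℂ) ((a : ℂ) + (b : ℂ) * Complex.I) * τ +
          (starRingEnd ℂ) ((c : ℂ) + (d : ℂ) * Complex.I)) =
      Complex.exp (-2 * Real.pi * Complex.I * m₂ *
        ((Complex.normSq ((a : ℂ) + (b : ℂ) * Complex.I) : ℂ) * τ +
          (starRingEnd ℂ) ((a : ℂ) + (b : ℂ) * Complex.I) * z₁ +
          ((a : ℂ) + (b : ℂ) * Complex.I) * z₂)) * ψ τ z₁ z₂) :
    ∀ a b c d : ℤ, ∀ τ z₁ z₂ : ℂ,
      (fun τ' z₁' z₂' => (m₁ : ℂ) * φ τ' z₁' z₂' * deriv (ψ τ' z₁') z₂'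
          - (m₂ : ℂ) * ψ τ' z₁' z₂' * deriv (φ τ' z₁') z₂')
        τ (z₁ + ((a : ℂ) + (b : ℂ) * Complex.I) * τ + ((c : ℂ) + (d : ℂ) * Complex.I))
          (z₂ + (starRingEnd ℂ) ((a : ℂ) + (b : ℂ) * Complex.I) * τ +
            (starRingEnd ℂ) ((c : ℂ) + (d : ℂ) * Complex.I)) =
      Complex.exp (-2 * Real.pi * Complex.I * ((m₁ : ℂ) + m₂) *
        ((Complex.normSq ((a : ℂ) + (b : ℂ) * Complex.I) : ℂ) * τ +
          (starRingEnd ℂ) ((a : ℂ) + (b : ℂ) * Complex.I) * z₁ +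
          ((a : ℂ) + (b : ℂ) * Complex.I) * z₂)) *
        ((m₁ : ℂ) * φ τ z₁ z₂ * deriv (ψ τ z₁) z₂
          - (m₂ : ℂ) * ψ τ z₁ z₂ * deriv (φ τ z₁) z₂) := by
  intro a b c d τ z₁ z₂
  simp only []
  rw [hφ a b c d τ z₁ z₂, hψ a b c d τ z₁ z₂,
    aux_shift_deriv m₁ φ hφd a b c d τ z₁ z₂ (fun w => hφ a b c d τ z₁ w),
    aux_shift_deriv m₂ ψ hψd a b c d τ z₁ z₂ (fun w => hψ a b c d τ z₁ w)]
  rw [show (-2 * ↑Real.pi * Complex.I * ((m₁ : ℂ) + m₂) *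
        ((Complex.normSq ((a : ℂ) + (b : ℂ) * Complex.I) : ℂ) * τ +
          (starRingEnd ℂ) ((a : ℂ) + (b : ℂ) * Complex.I) * z₁ +
          ((a : ℂ) + (b : ℂ) * Complex.I) * z₂)) =
      (-2 * ↑Real.pi * Complex.I * (m₁ : ℂ) *
        ((Complex.normSq ((a : ℂ) + (b : ℂ) * Complex.I) : ℂ) * τ +
          (starRingEnd ℂ) ((a : ℂ) + (b : ℂ) * Complex.I) * z₁ +
          ((a : ℂ) + (b : ℂ) * Complex.I) * z₂)) +
      (-2 * ↑Real.pi * Complex.I * (m₂ : ℂ) *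
        ((Complex.normSq ((a : ℂ) + (b : ℂ) * Complex.I) : ℂ) * τ +
          (starRingEnd ℂ) ((a : ℂ) + (b : ℂ) * Complex.I) * z₁ +
          ((a : ℂ) + (b : ℂ) * Complex.I) * z₂)) by ring, Complex.exp_add]
  ring
end
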